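/- For 0 < ρ < 1 with 3 − ρ^{-2} > 0 (i.e., ρ² > 1/3), the function mse(α) = (2·snr²/(2-α))·(1 − α/(α − 1 + ρ^{-2})) on (0,2) attains its unique minimum at α_opt = (3 − ρ^{-2})/2. -/

import Mathlib

/-- For `ρ ∈ (1/√3, 1)` (equivalently `ρ² > 1/3`, so that `α_opt = (3 - ρ⁻²)/2 > 0`), the
closed-form MSE attains its unique minimum on `(0,2)` at `α_opt = (3 - ρ⁻²)/2`. -/
theorem stmt8 (snr ρ : ℝ) (hsnr : 0 < snr) (hρ0 : 0 < ρ) (hρ1 : ρ < 1)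
    (hρ3 : 0 < 3 - (ρ ^ 2)⁻¹) :
    (3 - (ρ ^ 2)⁻¹) / 2 ∈ Set.Ioo (0 : ℝ) 2 ∧
    ∀ α ∈ Set.Ioo (0 : ℝ) 2, α ≠ (3 - (ρ ^ 2)⁻¹) / 2 →
      (2 * snr ^ 2 / (2 - (3 - (ρ ^ 2)⁻¹) / 2)) *
          (1 - ((3 - (ρ ^ 2)⁻¹) / 2) / ((3 - (ρ ^ 2)⁻¹) / 2 - 1 + (ρ ^ 2)⁻¹)) <
        (2 * snr ^ 2 / (2 - α)) * (1 - α / (α - 1 + (ρ ^ 2)⁻¹)) := by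
  have hρ2 : ρ ^ 2 < 1 := by nlinarith
  have hρ2p : 0 < ρ ^ 2 := by positivity
  have hc1 : 1 < (ρ ^ 2)⁻¹ := (one_lt_inv₀ hρ2p).mpr hρ2
  set c := (ρ ^ 2)⁻¹ with hc
  have hc3 : c < 3 := by linarith
  have key : ∀ β : ℝ, 0 < β → β < 2 →
      (2 * snr ^ 2 / (2 - β)) * (1 - β / (β - 1 + c))
        = 2 * snr ^ 2 * (c - 1) / ((2 - β) * (β - 1 + c)) := by
    intro β h0 h2
    have hd1 : (0:ℝ) < β - 1 + c := by linarith
    have hd2 : (0:ℝ) < 2 - β := by linarith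
    field_simp
    ring
  refine ⟨⟨by linarith, by linarith⟩, ?_⟩
  intro α hα hne
  obtain ⟨h0, h2⟩ := hα
  have ho0 : (0:ℝ) < (3 - c) / 2 := by linarith
  have ho2 : (3 - c) / 2 < 2 := by linarith
  rw [key α h0 h2, key _ ho0 ho2]
  have hd1 : (0:ℝ) < α - 1 + c := by linarith
  have hd2 : (0:ℝ) < 2 - α := by linarith
  have hsq : 0 < (α - (3 - c) / 2) ^ 2 := by
    have : α - (3 - c) / 2 ≠ 0 := sub_ne_zero.mpr hne
    positivity
  have hsnr2 : 0 < snr ^ 2 := by positivity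
  rw [div_lt_div_iff₀ (by nlinarith) (by positivity)]
  nlinarith [mul_pos hsnr2 hsq, mul_pos (mul_pos hsnr2 hsq) (sub_pos.mpr hc1)]
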